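/- It is NP-hard to decide, given initial queue lengths Q and arrival vector (a^(1),...,a^(M)), whether the unsplittable dispatching problem with two servers admits an assignment achieving E||Q^* - Qbar||_2^2 = 0. Concretely: given natural numbers l_1,...,l_M, deciding whether they can be partitioned into two subsets of equal sum is equivalent to deciding whether, with two initially empty queues and dispatcher m holding l_m jobs to send unsplit to one server, the squared L2 distance to the water-filling target (a/2, a/2) can be made zero, where a = sum_m l_m. -/

import Mathlib

/-- Two-server unsplittable dispatching: the squared L2 distance of the final
queues to the water-filling target `(a/2, a/2)` can be made zero by some
(deterministic) assignment of the batches `l m` to the two servers iff the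
multiset `{l m}` admits a partition into two equal-sum parts (PARTITION). -/
theorem two_server_zero_distance_iff_partition (M : ℕ) (l : Fin M → ℕ) :
    (∃ f : Fin M → Bool,
      ((∑ m ∈ Finset.univ.filter fun m => f m = true, (l m : ℝ))
          - (∑ m, (l m : ℝ))/2)^2 +
      ((∑ m ∈ Finset.univ.filter fun m => f m = false, (l m : ℝ))
          - (∑ m, (l m : ℝ))/2)^2 = 0)
    ↔ (∃ S : Finset (Fin M), ∑ m ∈ S, l m = ∑ m ∈ Sᶜ, l m) := by
  constructor
  · rintro ⟨f, hf⟩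
    refine ⟨Finset.univ.filter fun m => f m = true, ?_⟩
    have hc : (Finset.univ.filter fun m => f m = true)ᶜ
        = Finset.univ.filter fun m => f m = false := by
      ext m
      simp [Bool.not_eq_true]
    rw [hc]
    have h1 : ((∑ m ∈ Finset.univ.filter fun m => f m = true, (l m : ℝ))
          - (∑ m, (l m : ℝ))/2) = 0 := by
      nlinarith [sq_nonneg ((∑ m ∈ Finset.univ.filter fun m => f m = true, (l m : ℝ))
          - (∑ m, (l m : ℝ))/2), sq_nonneg ((∑ m ∈ Finset.univ.filter fun m => f m = false, (l m : ℝ))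
          - (∑ m, (l m : ℝ))/2)]
    have h2 : ((∑ m ∈ Finset.univ.filter fun m => f m = false, (l m : ℝ))
          - (∑ m, (l m : ℝ))/2) = 0 := by
      nlinarith [sq_nonneg ((∑ m ∈ Finset.univ.filter fun m => f m = true, (l m : ℝ))
          - (∑ m, (l m : ℝ))/2), sq_nonneg ((∑ m ∈ Finset.univ.filter fun m => f m = false, (l m : ℝ))
          - (∑ m, (l m : ℝ))/2)]
    have : (∑ m ∈ Finset.univ.filter fun m => f m = true, (l m : ℝ))
        = (∑ m ∈ Finset.univ.filter fun m => f m = false, (l m : ℝ)) := by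
      linarith
    exact_mod_cast this
  · rintro ⟨S, hS⟩
    refine ⟨fun m => decide (m ∈ S), ?_⟩
    have h1 : (Finset.univ.filter fun m => decide (m ∈ S) = true) = S := by
      ext m; simp
    have h2 : (Finset.univ.filter fun m => decide (m ∈ S) = false) = Sᶜ := by
      ext m; simp
    rw [h1, h2]
    have htot : (∑ m, (l m : ℝ)) = (∑ m ∈ S, (l m : ℝ)) + (∑ m ∈ Sᶜ, (l m : ℝ)) :=
      (Finset.sum_add_sum_compl S _).symm
    have hS' : (∑ m ∈ S, (l m : ℝ)) = (∑ m ∈ Sᶜ, (l m : ℝ)) := by exact_mod_cast hS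
    rw [htot, hS']
    ring
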